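/- (Degree and rank bounds for the Client-Waiter construction.) Let φ be a CNF formula with clauses C₁,…,Cₘ over variables x₁,…,xₙ, y₁,…,yₙ in which every clause has exactly 3 literals, every variable appears in at most 7 clauses, and every clause contains at least one literal on an x-variable. Define the hypergraph H on the 8n vertices ⋃₁≤i≤n Sᵢ ∪ Fᵢ, where Sᵢ = {sᵢ⁰, sᵢᵀ, sᵢᶠ, sᵢ¹} and Fᵢ = {fᵢ⁰, fᵢᵀ, fᵢᵀ', fᵢᶠ}, with hyperedges: (block) every 3-element subset of Sᵢ and every 3-element subset of Fᵢ; (pair) the four sets {sᵢ⁰, sᵢᵀ, fᵢ⁰, fᵢᵀ}, {sᵢ⁰, fᵢᶠ, fᵢᵀ, sᵢᶠ}, {sᵢ⁰, fᵢᶠ, sᵢᵀ, fᵢᵀ'}, {sᵢ⁰, sᵢᶠ, fᵢ⁰, fᵢᵀ'} for each i; (clause) for each clause Cⱼ = {lⱼ¹, lⱼ², lⱼ³}, all sets h₁ ∪ h₂ ∪ h₃ where hₖ ∈ Hⱼᵏ, with Hⱼᵏ = {{sᵢ⁰, sᵢᵀ}} if lⱼᵏ = xᵢ, Hⱼᵏ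 = {{sᵢ⁰, sᵢᶠ}} if lⱼᵏ = ¬xᵢ, Hⱼᵏ = {{fᵢ⁰, fᵢᵀ}, {fᵢ⁰, fᵢᵀ'}} if lⱼᵏ = yᵢ, and Hⱼᵏ = {{fᵢᶠ}} if lⱼᵏ = ¬yᵢ. Then every hyperedge of H has size at most 6 and every vertex of H has degree at most 35. -/

import Mathlib

/-- Vertices of the Client-Waiter construction: for each `i`, the four
vertices `sᵢ⁰, sᵢᵀ, sᵢᶠ, sᵢ¹` of `Sᵢ` and the four vertices
`fᵢ⁰, fᵢᵀ, fᵢᵀ', fᵢᶠ` of `Fᵢ`. -/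
inductive CWVertex
  | s0 : ℕ → CWVertex
  | sT : ℕ → CWVertex
  | sF : ℕ → CWVertex
  | s1 : ℕ → CWVertex
  | f0 : ℕ → CWVertex
  | fT : ℕ → CWVertex
  | fT' : ℕ → CWVertex
  | fF : ℕ → CWVertex
deriving DecidableEq

open CWVertex

/-- A literal of the Paired-SAT formula: `((true, i), b)` is the literal on
the variable `xᵢ` of polarity `b`, and `((false, i), b)` is the literal on
the variable `yᵢ` of polarity `b`. -/
abbrev CWLit := (Bool × ℕ) × Bool

/-- The set `Sᵢ`. -/
def Sset (i : ℕ) : Finset CWVertex := {s0 i, sT i, sF i, s1 i}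

/-- The set `Fᵢ`. -/
def Fset (i : ℕ) : Finset CWVertex := {f0 i, fT i, fT' i, fF i}

/-- The block-hyperedges for index `i`: every 3-element subset of `Sᵢ` and
every 3-element subset of `Fᵢ`. -/
noncomputable def blockEdges (i : ℕ) : List (Finset CWVertex) :=
  (Finset.powersetCard 3 (Sset i)).toList ++ (Finset.powersetCard 3 (Fset i)).toList

/-- The four pair-hyperedges for index `i`. -/
def pairEdges (i : ℕ) : List (Finset CWVertex) :=
  [ {s0 i, sT i, f0 i, fT i},
    {s0 i, fF i, fT i, sF i},
    {s0 i, fF i, sT i, fT' i},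
    {s0 i, sF i, f0 i, fT' i} ]

/-- The set `Hⱼᵏ` associated with a literal: `{{sᵢ⁰, sᵢᵀ}}` for `xᵢ`,
`{{sᵢ⁰, sᵢᶠ}}` for `¬xᵢ`, `{{fᵢ⁰, fᵢᵀ}, {fᵢ⁰, fᵢᵀ'}}` for `yᵢ`, and
`{{fᵢᶠ}}` for `¬yᵢ`. -/
def Hlit : CWLit → List (Finset CWVertex)
  | ((true, i), true) => [{s0 i, sT i}]
  | ((true, i), false) => [{s0 i, sF i}]
  | ((false, i), true) => [{f0 i, fT i}, {f0 i, fT' i}]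
  | ((false, i), false) => [{fF i}]

/-- The clause-hyperedges associated with a clause `Cⱼ = {lⱼ¹, lⱼ², lⱼ³}`:
all the sets `h₁ ∪ h₂ ∪ h₃` where `hₖ ∈ Hⱼᵏ`. -/
noncomputable def clauseEdges (C : Finset CWLit) : List (Finset CWVertex) :=
  (C.toList.map Hlit).foldr
    (fun hs acc => hs.flatMap (fun h => acc.map (fun e => h ∪ e))) [∅]

def varOf : CWVertex → Bool × ℕ
  | s0 i => (true, i)
  | sT i => (true, i)
  | sF i => (true, i)
  | s1 i => (true, i)
  | f0 i => (false, i)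
  | fT i => (false, i)
  | fT' i => (false, i)
  | fF i => (false, i)

lemma CW.Hlit_card (l : CWLit) (h : Finset CWVertex) (hh : h ∈ Hlit l) : h.card ≤ 2 := by
  obtain ⟨⟨b, i⟩, c⟩ := l
  cases b <;> cases c <;> simp [Hlit] at hh
  · subst hh; simp
  · rcases hh with rfl | rfl <;> exact le_trans (Finset.card_insert_le _ _) (by simp)
  · subst hh; exact le_trans (Finset.card_insert_le _ _) (by simp)
  · subst hh; exact le_trans (Finset.card_insert_le _ _) (by simp)

lemma CW.Hlit_var (l : CWLit) (h : Finset CWVertex) (v : CWVertex)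
    (hh : h ∈ Hlit l) (hv : v ∈ h) : varOf v = l.1 := by
  obtain ⟨⟨b, i⟩, c⟩ := l
  cases b <;> cases c <;> simp [Hlit] at hh <;>
    first
      | (subst hh; simp at hv; rcases hv with rfl | rfl <;> simp [varOf])
      | (subst hh; simp at hv; subst hv; simp [varOf])
      | (rcases hh with rfl | rfl <;> simp at hv <;> rcases hv with rfl | rfl <;> simp [varOf])

lemma CW.Hlit_len_le (l : CWLit) : (Hlit l).length ≤ 2 := by
  obtain ⟨⟨b, i⟩, c⟩ := l; cases b <;> cases c <;> simp [Hlit]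

lemma CW.Hlit_len_one (l : CWLit) (hl : l.1.1 = true) : (Hlit l).length = 1 := by
  obtain ⟨⟨b, i⟩, c⟩ := l; simp at hl; subst hl; cases c <;> simp [Hlit]

lemma CW.foldr_spec (L : List CWLit) :
    ∀ e ∈ (L.map Hlit).foldr
      (fun hs acc => hs.flatMap (fun h => acc.map (fun e => h ∪ e))) [∅],
      e.card ≤ 2 * L.length ∧ ∀ v ∈ e, ∃ l ∈ L, l.1 = varOf v := by
  induction L with
  | nil =>
    intro e he
    simp at he
    subst he
    simp
  | cons a t ih =>
    intro e he
    simp only [List.map_cons, List.foldr_cons, List.mem_flatMap, List.mem_map] at he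
    obtain ⟨h, hh, e', he', rfl⟩ := he
    refine ⟨?_, ?_⟩
    · have h1 := (ih e' he').1
      have h2 := CW.Hlit_card a h hh
      have h3 := Finset.card_union_le h e'
      simp only [List.length_cons]
      omega
    · intro v hv
      rcases Finset.mem_union.mp hv with hv | hv
      · exact ⟨a, List.mem_cons_self, (CW.Hlit_var a h v hh hv).symm⟩
      · obtain ⟨l, hl, hl'⟩ := (ih e' he').2 v hv
        exact ⟨l, List.mem_cons_of_mem _ hl, hl'⟩

lemma CW.foldr_len (L : List CWLit) :
    ((L.map Hlit).foldr
      (fun hs acc => hs.flatMap (fun h => acc.map (fun e => h ∪ e))) [∅]).length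
      = (L.map fun l => (Hlit l).length).prod := by
  induction L with
  | nil => simp
  | cons a t ih =>
    simp only [List.map_cons, List.foldr_cons, List.prod_cons, ← ih]
    rw [List.length_flatMap]
    have hc : (List.length ∘ fun h : Finset CWVertex =>
        ((t.map Hlit).foldr
          (fun hs acc => hs.flatMap (fun h => acc.map (fun e => h ∪ e))) [∅]).map
          (fun e => h ∪ e)) = fun _ => ((t.map Hlit).foldr
          (fun hs acc => hs.flatMap (fun h => acc.map (fun e => h ∪ e))) [∅]).length := by
      funext h; simp
    simp only [List.length_map]
    rw [List.map_const', List.sum_replicate, smul_eq_mul]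

lemma CW.countP_toList {α : Type*} (s : Finset α) (p : α → Bool) :
    s.toList.countP p = (s.filter (fun a => p a)).card := by
  rcases s with ⟨m, hm⟩
  induction m using Quotient.inductionOn with
  | h l =>
    simp only [Finset.toList, Finset.filter, Finset.card, Multiset.quot_mk_to_coe]
    have hp : ((↑l : Multiset α).toList).Perm l :=
      Multiset.coe_eq_coe.mp (Multiset.coe_toList _)
    rw [hp.countP_eq]
    simp [List.countP_eq_length_filter]

lemma CW.countP_powerset_notmem {α : Type*} [DecidableEq α] (S : Finset α) (v : α)
    (hv : v ∉ S) :
    (Finset.powersetCard 3 S).toList.countP (fun e => decide (v ∈ e)) = 0 := by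
  rw [CW.countP_toList]
  rw [Finset.card_eq_zero, Finset.filter_eq_empty_iff]
  intro e he
  rw [Finset.mem_powersetCard] at he
  simp only [decide_eq_true_eq]
  exact fun hve => hv (he.1 hve)

lemma CW.countP_powerset {α : Type*} [DecidableEq α] (S : Finset α) (v : α)
    (hS : S.card = 4) :
    (Finset.powersetCard 3 S).toList.countP (fun e => decide (v ∈ e)) ≤ 3 := by
  by_cases hv : v ∈ S
  · rw [CW.countP_toList]
    have key : (Finset.powersetCard 3 S).filter (fun e => ¬ (decide (v ∈ e) = true))
        = Finset.powersetCard 3 (S.erase v) := by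
      ext e
      simp only [Finset.mem_filter, Finset.mem_powersetCard, decide_eq_true_eq,
        Finset.subset_erase]
      tauto
    have h2 := Finset.card_filter_add_card_filter_not
      (s := Finset.powersetCard 3 S) (p := fun e => decide (v ∈ e) = true)
    rw [key, Finset.card_powersetCard, Finset.card_powersetCard,
      Finset.card_erase_of_mem hv, hS] at h2
    norm_num at h2
    simp only [decide_eq_true_eq]
    omega
  · rw [CW.countP_powerset_notmem S v hv]
    omega

lemma CW.Sset_card (i : ℕ) : (Sset i).card = 4 := by
  simp [Sset, Finset.card_insert_of_notMem, Finset.mem_insert]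

lemma CW.Fset_card (i : ℕ) : (Fset i).card = 4 := by
  simp [Fset, Finset.card_insert_of_notMem, Finset.mem_insert]

lemma CW.not_mem_SF (v : CWVertex) (i : ℕ) (h : (varOf v).2 ≠ i) :
    v ∉ Sset i ∧ v ∉ Fset i := by
  cases v <;> simp_all [Sset, Fset, varOf]

lemma CW.mem_SF (v : CWVertex) (i : ℕ) : v ∉ Sset i ∨ v ∉ Fset i := by
  cases v <;> simp [Sset, Fset]

lemma CW.block_countP_le (v : CWVertex) (i : ℕ) :
    (blockEdges i).countP (fun e => decide (v ∈ e)) ≤ 3 := by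
  rw [blockEdges, List.countP_append]
  rcases CW.mem_SF v i with hv | hv
  · rw [CW.countP_powerset_notmem _ _ hv]
    have := CW.countP_powerset (Fset i) v (CW.Fset_card i)
    omega
  · rw [CW.countP_powerset_notmem _ _ hv]
    have := CW.countP_powerset (Sset i) v (CW.Sset_card i)
    omega

lemma CW.block_countP_ne (v : CWVertex) (i : ℕ) (h : (varOf v).2 ≠ i) :
    (blockEdges i).countP (fun e => decide (v ∈ e)) = 0 := by
  obtain ⟨h1, h2⟩ := CW.not_mem_SF v i h
  rw [blockEdges, List.countP_append,
    CW.countP_powerset_notmem _ _ h1, CW.countP_powerset_notmem _ _ h2]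

lemma CW.pair_countP_le (v : CWVertex) (i : ℕ) :
    (pairEdges i).countP (fun e => decide (v ∈ e)) ≤ 4 := by
  refine le_trans List.countP_le_length ?_
  simp [pairEdges]

lemma CW.pair_countP_ne (v : CWVertex) (i : ℕ) (h : (varOf v).2 ≠ i) :
    (pairEdges i).countP (fun e => decide (v ∈ e)) = 0 := by
  rw [List.countP_eq_zero]
  intro e he
  cases v <;>
    simp_all [pairEdges, varOf, Finset.mem_insert] <;>
    rcases he with rfl | rfl | rfl | rfl <;>
    simp_all [Finset.mem_insert]

lemma CW.clauseEdges_card (C : Finset CWLit) (hC : C.card = 3) :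
    ∀ e ∈ clauseEdges C, e.card ≤ 6 := by
  intro e he
  have := (CW.foldr_spec C.toList e he).1
  rwa [Finset.length_toList, hC] at this

lemma CW.clauseEdges_mem (C : Finset CWLit) (v : CWVertex) :
    ∀ e ∈ clauseEdges C, v ∈ e → ∃ b : Bool, (varOf v, b) ∈ C := by
  intro e he hv
  obtain ⟨l, hl, hl'⟩ := (CW.foldr_spec C.toList e he).2 v hv
  rw [Finset.mem_toList] at hl
  exact ⟨l.2, by rw [← hl']; exact hl⟩

lemma CW.clauseEdges_len (C : Finset CWLit) (hC : C.card = 3)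
    (hx : ∃ l ∈ C, l.1.1 = true) : (clauseEdges C).length ≤ 4 := by
  rw [clauseEdges, CW.foldr_len]
  obtain ⟨a, b, c, habc⟩ := List.length_eq_three.mp
    (by rw [Finset.length_toList, hC] : C.toList.length = 3)
  obtain ⟨l, hl, hl'⟩ := hx
  rw [← Finset.mem_toList, habc] at hl
  rw [habc]
  simp only [List.map_cons, List.map_nil, List.prod_cons, List.prod_nil, Nat.mul_one]
  have ha := CW.Hlit_len_le a
  have hb := CW.Hlit_len_le b
  have hcc := CW.Hlit_len_le c
  simp only [List.mem_cons, List.mem_singleton, List.not_mem_nil, or_false] at hl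
  rcases hl with rfl | rfl | rfl
  · rw [CW.Hlit_len_one _ hl']
    calc 1 * ((Hlit b).length * (Hlit c).length) = (Hlit b).length * (Hlit c).length := by ring
      _ ≤ 2 * 2 := Nat.mul_le_mul hb hcc
  · rw [CW.Hlit_len_one _ hl']
    calc (Hlit a).length * (1 * (Hlit c).length) = (Hlit a).length * (Hlit c).length := by ring
      _ ≤ 2 * 2 := Nat.mul_le_mul ha hcc
  · rw [CW.Hlit_len_one _ hl']
    calc (Hlit a).length * ((Hlit b).length * 1) = (Hlit a).length * (Hlit b).length := by ring
      _ ≤ 2 * 2 := Nat.mul_le_mul ha hb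

lemma CW.countP_flatMap {α β : Type*} (l : List α) (f : α → List β) (p : β → Bool) :
    (l.flatMap f).countP p = (l.map fun a => (f a).countP p).sum := by
  induction l with
  | nil => simp
  | cons a t ih => simp [List.flatMap_cons, List.countP_append, ih]

lemma CW.sum_le_mul_countP {α : Type*} (K : ℕ) (p : α → Bool) (g : α → ℕ) :
    ∀ l : List α, (∀ a ∈ l, g a ≤ if p a then K else 0) →
      (l.map g).sum ≤ K * l.countP p := by
  intro l
  induction l with
  | nil => simp
  | cons a t ih =>
    intro h
    have ha := h a List.mem_cons_self
    have ht := ih (fun b hb => h b (List.mem_cons_of_mem _ hb))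
    simp only [List.map_cons, List.sum_cons, List.countP_cons]
    by_cases hpa : p a = true
    · simp only [hpa, if_true] at ha ⊢
      rw [Nat.mul_add, Nat.mul_one]
      omega
    · simp [hpa] at ha ⊢
      omega

lemma CW.countP_range_le (n j : ℕ) :
    (List.range n).countP (fun i => decide (i + 1 = j)) ≤ 1 := by
  match j with
  | 0 => simp [List.countP_eq_zero]
  | k + 1 =>
    have h : (List.range n).countP (fun i => decide (i + 1 = k + 1)) =
        (List.range n).count k := by
      rw [List.count_eq_countP]
      apply List.countP_congr
      intro x _
      constructor
      · intro hx; simp at hx ⊢; omega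
      · intro hx; simp at hx ⊢; omega
    rw [h]
    exact List.nodup_iff_count_le_one.mp List.nodup_range k

/-- Degree and rank bounds for the Client-Waiter construction: if `φ` is a CNF
formula over the variables `x₁, …, xₙ, y₁, …, yₙ` in which every clause has
exactly `3` literals, every variable appears in at most `7` clauses, and every
clause contains at least one literal on an `x`-variable, then in the
constructed hypergraph every hyperedge has size at most `6` and every vertex
has degree at most `35`. -/
theorem clientWaiter_bounds (n : ℕ) (φ : List (Finset CWLit))
    (hvars : ∀ C ∈ φ, ∀ l ∈ C, 1 ≤ l.1.2 ∧ l.1.2 ≤ n)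
    (hsize : ∀ C ∈ φ, C.card = 3)
    (hdeg : ∀ v : Bool × ℕ, φ.countP (fun C => decide (∃ b : Bool, (v, b) ∈ C)) ≤ 7)
    (hxlit : ∀ C ∈ φ, ∃ l ∈ C, l.1.1 = true) :
    ∀ H : List (Finset CWVertex),
      H = (List.range n).flatMap (fun i₀ => blockEdges (i₀ + 1)) ++
          (List.range n).flatMap (fun i₀ => pairEdges (i₀ + 1)) ++
          φ.flatMap clauseEdges →
      (∀ e ∈ H, e.card ≤ 6) ∧
      (∀ v : CWVertex, H.countP (fun e => decide (v ∈ e)) ≤ 35) := by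
  intro H hH
  subst hH
  constructor
  · intro e he
    rcases List.mem_append.mp he with he | he
    · rcases List.mem_append.mp he with he | he
      · obtain ⟨i₀, _, he⟩ := List.mem_flatMap.mp he
        rw [blockEdges] at he
        rcases List.mem_append.mp he with he | he <;>
          · rw [Finset.mem_toList, Finset.mem_powersetCard] at he
            omega
      · obtain ⟨i₀, _, he⟩ := List.mem_flatMap.mp he
        simp only [pairEdges, List.mem_cons, List.not_mem_nil, or_false] at he
        rcases he with rfl | rfl | rfl | rfl <;>
          refine le_trans (le_trans (Finset.card_insert_le _ _)
            (Nat.add_le_add_right (le_trans (Finset.card_insert_le _ _)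
              (Nat.add_le_add_right (Finset.card_insert_le _ _) 1)) 1)) (by simp)
    · obtain ⟨C, hC, he⟩ := List.mem_flatMap.mp he
      exact CW.clauseEdges_card C (hsize C hC) e he
  · intro v
    rw [List.countP_append, List.countP_append,
      CW.countP_flatMap, CW.countP_flatMap, CW.countP_flatMap]
    have hb : ((List.range n).map
        fun i₀ => (blockEdges (i₀ + 1)).countP (fun e => decide (v ∈ e))).sum ≤ 3 := by
      refine le_trans (CW.sum_le_mul_countP 3
        (fun i₀ => decide (i₀ + 1 = (varOf v).2)) _ _ ?_) ?_
      · intro i₀ _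
        by_cases h : i₀ + 1 = (varOf v).2
        · rw [if_pos (by simp [h])]
          exact CW.block_countP_le v _
        · rw [if_neg (by simp [h])]
          exact Nat.le_of_eq (CW.block_countP_ne v _ (fun hh => h hh.symm))
      · have := CW.countP_range_le n (varOf v).2
        omega
    have hp : ((List.range n).map
        fun i₀ => (pairEdges (i₀ + 1)).countP (fun e => decide (v ∈ e))).sum ≤ 4 := by
      refine le_trans (CW.sum_le_mul_countP 4
        (fun i₀ => decide (i₀ + 1 = (varOf v).2)) _ _ ?_) ?_
      · intro i₀ _
        by_cases h : i₀ + 1 = (varOf v).2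
        · rw [if_pos (by simp [h])]
          exact CW.pair_countP_le v _
        · rw [if_neg (by simp [h])]
          exact Nat.le_of_eq (CW.pair_countP_ne v _ (fun hh => h hh.symm))
      · have := CW.countP_range_le n (varOf v).2
        omega
    have hc : (φ.map
        fun C => (clauseEdges C).countP (fun e => decide (v ∈ e))).sum ≤ 28 := by
      refine le_trans (CW.sum_le_mul_countP 4
        (fun C => decide (∃ b : Bool, (varOf v, b) ∈ C)) _ _ ?_) ?_
      · intro C hCφ
        by_cases h : ∃ b : Bool, (varOf v, b) ∈ C
        · rw [if_pos (by simp [h])]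
          exact le_trans List.countP_le_length
            (CW.clauseEdges_len C (hsize C hCφ) (hxlit C hCφ))
        · rw [if_neg (by simp [h])]
          refine Nat.le_of_eq (List.countP_eq_zero.mpr ?_)
          intro e he
          simp only [decide_eq_true_eq]
          exact fun hv => h (CW.clauseEdges_mem C v e he hv)
      · have := hdeg (varOf v)
        omega
    omega
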